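/- Let X_{n+1} = (X_n - δ_{n+1})₊ + β_{n+1} with (δ_n) i.i.d. shifted geometric(α) and (β_n) i.i.d. on ℕ₀ with p.g.f. φ_β, all independent. Then the p.g.f. Φ_{n+1}(z) = E(z^{X_{n+1}}) satisfies Φ_{n+1}(z) = φ_β(z)·[ ᾱ(1-z)/(ᾱ-z) · Φ_n(ᾱ) - αz/(ᾱ-z) · Φ_n(z) ] for z ≠ ᾱ. -/

import Mathlib

open MeasureTheory ProbabilityTheory

private lemma geom_aux (a z : ℝ) (k : ℕ) :
    (∑ j ∈ Finset.range k, a ^ j * z ^ (k - j)) * (z - a) = z ^ (k + 1) - z * a ^ k := by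
  induction k with
  | zero => simp
  | succ k ih =>
    rw [Finset.sum_range_succ]
    have h : ∀ j ∈ Finset.range k, a ^ j * z ^ (k + 1 - j) = z * (a ^ j * z ^ (k - j)) := by
      intro j hj
      have hjk : j < k := Finset.mem_range.mp hj
      have : k + 1 - j = (k - j) + 1 := by omega
      rw [this]; ring
    rw [Finset.sum_congr rfl h, ← Finset.mul_sum]
    have hk : k + 1 - k = 1 := by omega
    rw [hk]
    linear_combination z * ih

private lemma geo_inner_sum (α z : ℝ) (hα0 : 0 < α) (hα1 : α < 1) (hz : |z| ≤ 1)
    (hzne : z ≠ 1 - α) (k : ℕ) :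
    ∑' j : ℕ, α * (1 - α) ^ j * z ^ (k - j) =
      (1 - α) * (1 - z) / ((1 - α) - z) * (1 - α) ^ k - α * z / ((1 - α) - z) * z ^ k := by
  set a := 1 - α with ha
  have ha0 : 0 ≤ a := by simp [ha]; linarith
  have ha1 : a < 1 := by simp [ha]; linarith
  have hga : Summable fun j : ℕ => a ^ j := summable_geometric_of_lt_one ha0 ha1
  have hsum : Summable fun j : ℕ => α * a ^ j * z ^ (k - j) := by
    apply Summable.of_norm_bounded (hga.mul_left α)
    intro j
    have h1 : |z ^ (k - j)| ≤ 1 := by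
      rw [abs_pow]; exact pow_le_one₀ (abs_nonneg z) hz
    have : ‖α * a ^ j * z ^ (k - j)‖ = α * a ^ j * |z ^ (k - j)| := by
      rw [Real.norm_eq_abs, abs_mul, abs_mul]
      rw [abs_of_nonneg (le_of_lt hα0), abs_of_nonneg (pow_nonneg ha0 j)]
    rw [this]
    nlinarith [mul_nonneg (le_of_lt hα0) (pow_nonneg ha0 j), abs_nonneg (z ^ (k - j))]
  rw [← Summable.sum_add_tsum_nat_add k hsum]
  have htail : ∑' j : ℕ, α * a ^ (j + k) * z ^ (k - (j + k)) = a ^ k := by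
    have : ∀ j : ℕ, α * a ^ (j + k) * z ^ (k - (j + k)) = (α * a ^ k) * a ^ j := by
      intro j
      have : k - (j + k) = 0 := by omega
      rw [this, pow_add]; ring
    rw [tsum_congr this, tsum_mul_left, tsum_geometric_of_lt_one ha0 ha1]
    field_simp [ha]
    rw [ha, sub_sub_cancel, mul_div_right_comm, div_self hα0.ne', one_mul]
  rw [htail]
  have hαsum : ∑ j ∈ Finset.range k, α * a ^ j * z ^ (k - j)
      = α * ∑ j ∈ Finset.range k, a ^ j * z ^ (k - j) := by
    rw [Finset.mul_sum]; apply Finset.sum_congr rfl; intro j _; ring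
  have hza : z - a ≠ 0 := fun h => hzne (by linarith [sub_eq_zero.mp h])
  have hS := geom_aux a z k
  have hS' : ∑ j ∈ Finset.range k, a ^ j * z ^ (k - j) = (z ^ (k + 1) - z * a ^ k) / (z - a) := by
    field_simp
    linarith [hS]
  rw [hαsum, hS']
  have haz : a - z ≠ 0 := fun h => hza (by linarith)
  field_simp
  ring

private lemma integral_comp_eq_tsum {Ω E : Type*} [MeasurableSpace Ω] [MeasurableSpace E]
    [Countable E] [MeasurableSingletonClass E]
    (μ : Measure Ω) [IsProbabilityMeasure μ] (Y : Ω → E) (hY : Measurable Y)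
    (g : E → ℝ) (C : ℝ) (hg : ∀ e, |g e| ≤ C) :
    ∫ ω, g (Y ω) ∂μ = ∑' e, (μ (Y ⁻¹' {e})).toReal * g e := by
  rw [← integral_map hY.aemeasurable (measurable_of_countable g).aestronglyMeasurable]
  have : IsProbabilityMeasure (μ.map Y) := Measure.isProbabilityMeasure_map hY.aemeasurable
  have hint : Integrable g (μ.map Y) :=
    (integrable_const C).mono' (measurable_of_countable g).aestronglyMeasurable
      (ae_of_all _ fun e => by simpa using hg e)
  rw [integral_countable' hint]
  apply tsum_congr
  intro e
  rw [map_measureReal_apply hY (measurableSet_singleton e), smul_eq_mul, measureReal_def]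

theorem stmt5 {Ω : Type*} [MeasurableSpace Ω] (μ : Measure Ω) [IsProbabilityMeasure μ]
    (α : ℝ) (hα0 : 0 < α) (hα1 : α < 1) (X δ β : Ω → ℕ)
    (hmX : Measurable X) (hmδ : Measurable δ) (hmβ : Measurable β)
    (hδ : ∀ x : ℕ, μ {ω | δ ω = x} = ENNReal.ofReal (α * (1 - α) ^ x))
    (hindep : iIndepFun ![X, δ, β] μ) :
    ∀ z : ℝ, |z| ≤ 1 → z ≠ 1 - α →
      ∫ ω, z ^ ((X ω - δ ω) + β ω) ∂μ =
        (∫ ω, z ^ β ω ∂μ) *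
          ((1 - α) * (1 - z) / ((1 - α) - z) * (∫ ω, (1 - α) ^ X ω ∂μ)
            - α * z / ((1 - α) - z) * (∫ ω, z ^ X ω ∂μ)) := by
  intro z hz hzne
  have hmeas : ∀ i, Measurable (![X, δ, β] i) := by
    intro i; fin_cases i <;> simpa using ‹_›
  -- pow bounds
  have hpow : ∀ n : ℕ, |z ^ n| ≤ 1 := fun n => by
    rw [abs_pow]; exact pow_le_one₀ (abs_nonneg z) hz
  have ha0 : (0:ℝ) ≤ 1 - α := by linarith
  have ha1 : (1:ℝ) - α < 1 := by linarith
  have hapow : ∀ n : ℕ, |(1 - α) ^ n| ≤ 1 := fun n => by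
    rw [abs_pow, abs_of_nonneg ha0]; exact pow_le_one₀ ha0 (le_of_lt ha1)
  -- Step 1: factor out β
  have hprodindep : IndepFun (fun ω => (X ω, δ ω)) β μ := by
    have h := hindep.indepFun_prodMk hmeas 0 1 2 (by decide) (by decide)
    simpa using h
  have hFG : IndepFun (fun ω => z ^ (X ω - δ ω)) (fun ω => z ^ β ω) μ :=
    hprodindep.comp (measurable_of_countable fun p : ℕ × ℕ => z ^ (p.1 - p.2))
      (measurable_of_countable fun n : ℕ => z ^ n)
  have hfactor : ∫ ω, z ^ ((X ω - δ ω) + β ω) ∂μ =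
      (∫ ω, z ^ (X ω - δ ω) ∂μ) * ∫ ω, z ^ β ω ∂μ := by
    have : (fun ω => z ^ ((X ω - δ ω) + β ω))
        = fun ω => z ^ (X ω - δ ω) * z ^ β ω := by
      funext ω; rw [pow_add]
    rw [this]
    exact hFG.integral_fun_mul_eq_mul_integral
      ((measurable_of_countable (fun p : ℕ × ℕ => z ^ (p.1 - p.2))).comp
        (hmX.prodMk hmδ)).aestronglyMeasurable
      ((measurable_of_countable (fun n : ℕ => z ^ n)).comp hmβ).aestronglyMeasurable
  -- Step 2: compute ∫ z^(X-δ)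
  set P : ℕ → ℝ := fun k => (μ (X ⁻¹' {k})).toReal with hP
  set q : ℕ → ℝ := fun j => α * (1 - α) ^ j with hq
  have hq0 : ∀ j, 0 ≤ q j := fun j => mul_nonneg (le_of_lt hα0) (pow_nonneg ha0 j)
  have hP0 : ∀ k, 0 ≤ P k := fun k => ENNReal.toReal_nonneg
  have hP1 : ∀ k, P k ≤ 1 := fun k => by
    rw [hP]
    exact ENNReal.toReal_le_of_le_ofReal one_pos.le (by simpa using prob_le_one)
  have hPsum : Summable P := by
    apply ENNReal.summable_toReal
    have hdisj : Pairwise (Function.onFun Disjoint fun k : ℕ => X ⁻¹' {k}) := by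
      intro i j hij
      exact Disjoint.preimage X (by simp [hij])
    rw [← measure_iUnion hdisj fun k => hmX (measurableSet_singleton k)]
    exact ne_of_lt (lt_of_le_of_lt (measure_mono (Set.subset_univ _)) (by simp))
  have hqsum : Summable q :=
    (summable_geometric_of_lt_one ha0 ha1).mul_left α
  -- joint measure factorization
  have hXδindep : IndepFun X δ μ := by
    have h := hindep.indepFun (i := 0) (j := 1) (by decide)
    simpa using h
  have hjoint : ∀ p : ℕ × ℕ, (μ ((fun ω => (X ω, δ ω)) ⁻¹' {p})).toReal = P p.1 * q p.2 := by
    intro p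
    have hset : (fun ω => (X ω, δ ω)) ⁻¹' {p} = X ⁻¹' {p.1} ∩ δ ⁻¹' {p.2} := by
      ext ω; simp [Prod.ext_iff]
    rw [hset, hXδindep.measure_inter_preimage_eq_mul _ _ (measurableSet_singleton p.1)
      (measurableSet_singleton p.2)]
    have hδ' : μ (δ ⁻¹' {p.2}) = ENNReal.ofReal (q p.2) := by
      have := hδ p.2
      simpa [Set.preimage, hq] using this
    rw [hδ', ENNReal.toReal_mul, ENNReal.toReal_ofReal (hq0 p.2)]
  -- integral as double sum
  have hXδint : ∫ ω, z ^ (X ω - δ ω) ∂μ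
      = ∑' p : ℕ × ℕ, P p.1 * q p.2 * z ^ (p.1 - p.2) := by
    have := integral_comp_eq_tsum μ (fun ω => (X ω, δ ω)) (hmX.prodMk hmδ)
      (fun p : ℕ × ℕ => z ^ (p.1 - p.2)) 1 (fun p => hpow _)
    rw [this]
    exact tsum_congr fun p => by rw [hjoint p]
  have hPq : Summable fun p : ℕ × ℕ => P p.1 * q p.2 :=
    hPsum.mul_of_nonneg hqsum hP0 hq0
  have hjsummable : Summable fun p : ℕ × ℕ => P p.1 * q p.2 * z ^ (p.1 - p.2) := by
    apply Summable.of_norm_bounded hPq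
    intro p
    rw [Real.norm_eq_abs, abs_mul, abs_of_nonneg (mul_nonneg (hP0 _) (hq0 _))]
    nlinarith [hpow (p.1 - p.2), mul_nonneg (hP0 p.1) (hq0 p.2), abs_nonneg (z ^ (p.1 - p.2))]
  set A : ℝ := (1 - α) * (1 - z) / ((1 - α) - z) with hA
  set B : ℝ := α * z / ((1 - α) - z) with hB
  have hiter : ∑' p : ℕ × ℕ, P p.1 * q p.2 * z ^ (p.1 - p.2)
      = ∑' k : ℕ, (A * (P k * (1 - α) ^ k) - B * (P k * z ^ k)) := by
    rw [Summable.tsum_prod' hjsummable fun b => hjsummable.prod_factor b]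
    apply tsum_congr
    intro k
    have : ∀ j : ℕ, P k * q j * z ^ (k - j) = P k * (q j * z ^ (k - j)) := fun j => by ring
    rw [tsum_congr this, tsum_mul_left]
    have := geo_inner_sum α z hα0 hα1 hz hzne k
    rw [hq]
    simp only [hq] at this ⊢
    rw [this]
    ring
  -- split the sum
  have hsum1 : Summable fun k => P k * (1 - α) ^ k := by
    apply Summable.of_norm_bounded hPsum
    intro k
    rw [Real.norm_eq_abs, abs_mul, abs_of_nonneg (hP0 k)]
    nlinarith [hapow k, hP0 k, abs_nonneg ((1 - α) ^ k)]
  have hsum2 : Summable fun k => P k * z ^ k := by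
    apply Summable.of_norm_bounded hPsum
    intro k
    rw [Real.norm_eq_abs, abs_mul, abs_of_nonneg (hP0 k)]
    nlinarith [hpow k, hP0 k, abs_nonneg (z ^ k)]
  have hsplit : ∑' k : ℕ, (A * (P k * (1 - α) ^ k) - B * (P k * z ^ k))
      = A * (∑' k : ℕ, P k * (1 - α) ^ k) - B * (∑' k : ℕ, P k * z ^ k) := by
    rw [Summable.tsum_sub (hsum1.mul_left A) (hsum2.mul_left B), tsum_mul_left, tsum_mul_left]
  -- identify the two sums as integrals
  have hint1 : ∫ ω, (1 - α) ^ X ω ∂μ = ∑' k : ℕ, P k * (1 - α) ^ k :=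
    integral_comp_eq_tsum μ X hmX (fun n => (1 - α) ^ n) 1 hapow
  have hint2 : ∫ ω, z ^ X ω ∂μ = ∑' k : ℕ, P k * z ^ k :=
    integral_comp_eq_tsum μ X hmX (fun n => z ^ n) 1 hpow
  rw [hfactor, hXδint, hiter, hsplit, hint1, hint2]
  ring
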